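/- For nonnegative integers m with 2m ≤ N and real α₁, α₂, β > -1, the Hahn recursion coefficient d_{2m} = A(m,m,α₁,α₂,β,N)·B(m,m,α₁,α₂,β,N)·C(m,m,α₁,α₂,β,N) equals the product a_{6(m-1)+1}·a_{6(m-1)+3}·a_{6(m-1)+5} of the three bidiagonal entries, where only the a₅-type term carries a hypergeometric ratio and the a₃-type term carries its reciprocal, so that the identity reduces to an equality of rational functions: [(N-2n)(α₁+1+n)(α₁+β+2n+1)(α₂+β+2n+1)/((α₁+β+3n+1)(α₁+β+3n+2)(α₂+β+3n+1))] · [(2n+1)(β+2n+1)(α₁+β+2n+2)(α₂+β+2n+2)/((α₁+β+3n+2)(α₁+β+3n+3)(α₂+β+3n+2))] · [(n+1)(N-2n-1)(β+2n+2)(α₁-α₂+n+1)(α₁+β+2+n+N)/((2n+1)(α₁+β+3n+3)(α₁+β+3n+4)(α₂+β+3n+3))] = A(n+1,n+1,α₁,α₂,β,N)·B(n+1,n+1,α₁,α₂,β,N)·C(n+1,n+1,α₁,α₂,β,N), for m = n+1, where A(n₁,n₂,α₁,α₂,β,N) = n₁(n₁+n₂+α₂+β)(n₁+n₂+β)(N+n₁+α₁+β+1)/((n₁+2n₂+α₂+β)(2n₁+n₂+α₁+β)(2n₁+n₂+α₁+β+1)),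 B(n₁,n₂,α₁,α₂,β,N) = (n₁+α₁-α₂)(n₁+n₂+α₁+β)(n₁+n₂+β-1)(N-n₁-n₂+1)/((n₁+2n₂+α₂+β-1)(2n₁+n₂+α₁+β)(2n₁+n₂+α₁+β-1)), C(n₁,n₂,α₁,α₂,β,N) = (n₁+α₁)(n₁+n₂+α₁+β-1)(n₁+n₂+α₂+β-1)(N-n₁-n₂+2)/((n₁+2n₂+α₂+β-2)(2n₁+n₂+α₁+β-2)(2n₁+n₂+α₁+β-1)). -/

import Mathlib

/-- Hahn recursion auxiliary function `A(n₁,n₂,α₁,α₂,β,N)`. -/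
noncomputable def HA (n₁ n₂ α₁ α₂ β N : ℝ) : ℝ :=
  n₁ * (n₁ + n₂ + α₂ + β) * (n₁ + n₂ + β) * (N + n₁ + α₁ + β + 1)
    / ((n₁ + 2 * n₂ + α₂ + β) * (2 * n₁ + n₂ + α₁ + β) * (2 * n₁ + n₂ + α₁ + β + 1))

/-- Hahn recursion auxiliary function `B(n₁,n₂,α₁,α₂,β,N)`. -/
noncomputable def HB (n₁ n₂ α₁ α₂ β N : ℝ) : ℝ :=
  (n₁ + α₁ - α₂) * (n₁ + n₂ + α₁ + β) * (n₁ + n₂ + β - 1) * (N - n₁ - n₂ + 1)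
    / ((n₁ + 2 * n₂ + α₂ + β - 1) * (2 * n₁ + n₂ + α₁ + β) * (2 * n₁ + n₂ + α₁ + β - 1))

/-- Hahn recursion auxiliary function `C(n₁,n₂,α₁,α₂,β,N)`. -/
noncomputable def HC (n₁ n₂ α₁ α₂ β N : ℝ) : ℝ :=
  (n₁ + α₁) * (n₁ + n₂ + α₁ + β - 1) * (n₁ + n₂ + α₂ + β - 1) * (N - n₁ - n₂ + 2)
    / ((n₁ + 2 * n₂ + α₂ + β - 2) * (2 * n₁ + n₂ + α₁ + β - 2) * (2 * n₁ + n₂ + α₁ + β - 1))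


lemma hahn_key {A1 A2 A3 A4 A5 A6 A7 A8 A9 A10 A11 A12 A13 D1 D2 D3 D4 D5 D7 D8 : ℝ}
    (h1 : D1 ≠ 0) (h2 : D2 ≠ 0) (h3 : D3 ≠ 0) (h4 : D4 ≠ 0) (h5 : D5 ≠ 0)
    (h7 : D7 ≠ 0) (h8 : D8 ≠ 0) (h5' : A5 ≠ 0) :
    A1 * A2 * A3 * A4 / (D1 * D2 * D3) * (A5 * A6 * A7 * A8 / (D2 * D4 * D5)) *
      (A9 * A10 * A11 * A12 * A13 / (A5 * D4 * D7 * D8))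
    = A9 * A8 * A11 * A13 / (D8 * D4 * D7) * (A12 * A7 * A6 * A10 / (D5 * D4 * D2)) *
      (A2 * A3 * A4 * A1 / (D3 * D1 * D2)) := by
  rw [div_mul_div_comm, div_mul_div_comm, div_mul_div_comm, div_mul_div_comm,
    div_eq_div_iff (by simp [*]) (by simp [*])]
  ring

set_option maxHeartbeats 1600000 in
theorem hahn_second_subdiagonal (n N : ℕ) (hN : 2 * n + 1 ≤ N)
    (α₁ α₂ β : ℝ) (hα₁ : α₁ > -1) (hα₂ : α₂ > -1) (hβ : β > -1) :
    ((N : ℝ) - 2 * n) * (α₁ + 1 + n) * (α₁ + β + 2 * n + 1) * (α₂ + β + 2 * n + 1)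
        / ((α₁ + β + 3 * n + 1) * (α₁ + β + 3 * n + 2) * (α₂ + β + 3 * n + 1))
      * ((2 * (n : ℝ) + 1) * (β + 2 * n + 1) * (α₁ + β + 2 * n + 2) * (α₂ + β + 2 * n + 2)
        / ((α₁ + β + 3 * n + 2) * (α₁ + β + 3 * n + 3) * (α₂ + β + 3 * n + 2)))
      * (((n : ℝ) + 1) * ((N : ℝ) - 2 * n - 1) * (β + 2 * n + 2) * (α₁ - α₂ + n + 1)
          * (α₁ + β + 2 + n + N)
        / ((2 * (n : ℝ) + 1) * (α₁ + β + 3 * n + 3) * (α₁ + β + 3 * n + 4)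
          * (α₂ + β + 3 * n + 3)))
    = HA ((n : ℝ) + 1) ((n : ℝ) + 1) α₁ α₂ β N * HB ((n : ℝ) + 1) ((n : ℝ) + 1) α₁ α₂ β N
        * HC ((n : ℝ) + 1) ((n : ℝ) + 1) α₁ α₂ β N := by

  have hn : (0:ℝ) ≤ (n:ℝ) := Nat.cast_nonneg n
  have h21 : (2 * (n:ℝ) + 1) ≠ 0 := by positivity
  have h2 : (α₁ + β + 3 * n + 2) ≠ 0 := by nlinarith
  have h3 : (α₁ + β + 3 * n + 3) ≠ 0 := by nlinarith
  have h4 : (α₁ + β + 3 * n + 4) ≠ 0 := by nlinarith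
  have k2 : (α₂ + β + 3 * n + 2) ≠ 0 := by nlinarith
  have k3 : (α₂ + β + 3 * n + 3) ≠ 0 := by nlinarith
  simp only [HA, HB, HC]
  rcases eq_or_ne (α₁ + β + 3 * (n:ℝ) + 1) 0 with h1 | h1
  · have L : ((α₁ + β + 3 * (n:ℝ) + 1) * (α₁ + β + 3 * n + 2) * (α₂ + β + 3 * n + 1)) = 0 := by
      rw [h1]; ring
    have R : (((n:ℝ) + 1 + 2 * ((n:ℝ) + 1) + α₂ + β - 2) * (2 * ((n:ℝ) + 1) + ((n:ℝ) + 1) + α₁ + β - 2) *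
        (2 * ((n:ℝ) + 1) + ((n:ℝ) + 1) + α₁ + β - 1)) = 0 := by
      have : 2 * ((n:ℝ) + 1) + ((n:ℝ) + 1) + α₁ + β - 2 = 0 := by linarith
      rw [this]; ring
    rw [L, R, div_zero, div_zero, zero_mul, zero_mul, mul_zero]
  rcases eq_or_ne (α₂ + β + 3 * (n:ℝ) + 1) 0 with k1 | k1
  · have L : ((α₁ + β + 3 * (n:ℝ) + 1) * (α₁ + β + 3 * n + 2) * (α₂ + β + 3 * n + 1)) = 0 := by
      rw [k1]; ring
    have R : (((n:ℝ) + 1 + 2 * ((n:ℝ) + 1) + α₂ + β - 2) * (2 * ((n:ℝ) + 1) + ((n:ℝ) + 1) + α₁ + β - 2) *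
        (2 * ((n:ℝ) + 1) + ((n:ℝ) + 1) + α₁ + β - 1)) = 0 := by
      have : (n:ℝ) + 1 + 2 * ((n:ℝ) + 1) + α₂ + β - 2 = 0 := by linarith
      rw [this]; ring
    rw [L, R, div_zero, div_zero, zero_mul, zero_mul, mul_zero]
  rw [show 2*((n:ℝ)+1)+((n:ℝ)+1)+α₁+β+1 = α₁+β+3*(n:ℝ)+4 from by ring,
    show 2*((n:ℝ)+1)+((n:ℝ)+1)+α₁+β-1 = α₁+β+3*(n:ℝ)+2 from by ring,
    show 2*((n:ℝ)+1)+((n:ℝ)+1)+α₁+β-2 = α₁+β+3*(n:ℝ)+1 from by ring,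
    show 2*((n:ℝ)+1)+((n:ℝ)+1)+α₁+β = α₁+β+3*(n:ℝ)+3 from by ring,
    show (n:ℝ)+1+2*((n:ℝ)+1)+α₂+β-1 = α₂+β+3*(n:ℝ)+2 from by ring,
    show (n:ℝ)+1+2*((n:ℝ)+1)+α₂+β-2 = α₂+β+3*(n:ℝ)+1 from by ring,
    show (n:ℝ)+1+2*((n:ℝ)+1)+α₂+β = α₂+β+3*(n:ℝ)+3 from by ring,
    show (n:ℝ)+1+((n:ℝ)+1)+α₂+β-1 = α₂+β+2*(n:ℝ)+1 from by ring,
    show (n:ℝ)+1+((n:ℝ)+1)+α₂+β = α₂+β+2*(n:ℝ)+2 from by ring,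
    show (n:ℝ)+1+((n:ℝ)+1)+α₁+β-1 = α₁+β+2*(n:ℝ)+1 from by ring,
    show (n:ℝ)+1+((n:ℝ)+1)+α₁+β = α₁+β+2*(n:ℝ)+2 from by ring,
    show (n:ℝ)+1+((n:ℝ)+1)+β-1 = β+2*(n:ℝ)+1 from by ring,
    show (n:ℝ)+1+((n:ℝ)+1)+β = β+2*(n:ℝ)+2 from by ring,
    show (N:ℝ)+((n:ℝ)+1)+α₁+β+1 = α₁+β+2+(n:ℝ)+(N:ℝ) from by ring,
    show (n:ℝ)+1+α₁-α₂ = α₁-α₂+(n:ℝ)+1 from by ring,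
    show (n:ℝ)+1+α₁ = α₁+1+(n:ℝ) from by ring,
    show (N:ℝ)-((n:ℝ)+1)-((n:ℝ)+1)+1 = (N:ℝ)-2*(n:ℝ)-1 from by ring,
    show (N:ℝ)-((n:ℝ)+1)-((n:ℝ)+1)+2 = (N:ℝ)-2*(n:ℝ) from by ring]
  exact hahn_key h1 h2 k1 h3 k2 h4 k3 h21
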